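/- If G is a bipartite graph with a perfect matching such that Af(G) = r(G), where r(G) is the cyclomatic number, then every fixed edge of G is a cut-edge and every normal component Gᵢ of G satisfies Af(Gᵢ) = r(Gᵢ). -/

import Mathlib

open scoped Classical

variable {V : Type*} [Fintype V] [DecidableEq V]

/-- `M` is a perfect matching of `G`: a set of edges of `G` such that every
vertex lies in exactly one edge of `M`. -/
def IsPM (G : SimpleGraph V) (M : Set (Sym2 V)) : Prop :=
  M ⊆ G.edgeSet ∧ ∀ v : V, ∃! e, e ∈ M ∧ v ∈ e

/-- `M` is the unique perfect matching of `G`. -/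
def IsUniquePM (G : SimpleGraph V) (M : Set (Sym2 V)) : Prop :=
  IsPM G M ∧ ∀ M', IsPM G M' → M' = M

/-- A closed walk `c` is an `M`-alternating cycle: it is a cycle of even length
whose edges lie alternately in `M` and outside `M`. -/
def IsAltCycle {G : SimpleGraph V} (M : Set (Sym2 V)) {v : V} (c : G.Walk v v) : Prop :=
  c.IsCycle ∧ Even c.edges.length ∧
    ((∀ i (h : i < c.edges.length), c.edges.get ⟨i, h⟩ ∈ M ↔ Even i) ∨
     (∀ i (h : i < c.edges.length), c.edges.get ⟨i, h⟩ ∈ M ↔ ¬ Even i))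

/-- `S` is an anti-forcing set of the perfect matching `M` of `G`:
`S` consists of edges of `G` not in `M` and `M` is the unique perfect matching
of `G - S`. -/
def IsAntiForcingSet (G : SimpleGraph V) (M S : Set (Sym2 V)) : Prop :=
  S ⊆ G.edgeSet \ M ∧ IsUniquePM (G.deleteEdges S) M

/-- The anti-forcing number of a perfect matching `M` of `G`. -/
noncomputable def af (G : SimpleGraph V) (M : Set (Sym2 V)) : ℕ :=
  sInf {n | ∃ S : Finset (Sym2 V), S.card = n ∧ IsAntiForcingSet G M ↑S}

/-- The maximum anti-forcing number of `G`. -/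
noncomputable def Af (G : SimpleGraph V) : ℕ :=
  sSup {n | ∃ M, IsPM G M ∧ af G M = n}

/-- An edge of `G` is fixed if it lies in no perfect matching or in all perfect
matchings of `G`. -/
def IsFixedEdge (G : SimpleGraph V) (e : Sym2 V) : Prop :=
  e ∈ G.edgeSet ∧ ((∀ M, IsPM G M → e ∉ M) ∨ (∀ M, IsPM G M → e ∈ M))

/-- The subgraph of `G` formed by the non-fixed edges; its connected components
are the normal components of `G`. -/
def nonFixed (G : SimpleGraph V) : SimpleGraph V :=
  SimpleGraph.fromEdgeSet {e | e ∈ G.edgeSet ∧ ¬ IsFixedEdge G e}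

noncomputable instance (H : SimpleGraph V) : Fintype H.ConnectedComponent :=
  Fintype.ofSurjective H.connectedComponentMk (fun K => K.exists_rep)


/-! ### Auxiliary generic lemmas -/

open SimpleGraph

section Generic

variable {W : Type*} [Fintype W] [DecidableEq W]

lemma IsPM.unique_at {G : SimpleGraph W} {M : Set (Sym2 W)} (h : IsPM G M)
    {e f : Sym2 W} {v : W} (he : e ∈ M) (hf : f ∈ M) (hve : v ∈ e) (hvf : v ∈ f) : e = f := by
  obtain ⟨g, -, hg⟩ := h.2 v
  rw [hg e ⟨he, hve⟩, hg f ⟨hf, hvf⟩]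

lemma IsPM.exists_partner {G : SimpleGraph W} {M : Set (Sym2 W)} (h : IsPM G M) (v : W) :
    ∃ w, s(v, w) ∈ M ∧ v ≠ w ∧ ∀ w', s(v, w') ∈ M → w' = w := by
  obtain ⟨e, ⟨heM, hve⟩, -⟩ := h.2 v
  obtain ⟨w, rfl⟩ := Sym2.mem_iff_exists.1 hve
  refine ⟨w, heM, (h.1 heM).ne, fun w' hw' => ?_⟩
  have := h.unique_at hw' heM (Sym2.mem_mk_left v w') (Sym2.mem_mk_left v w)
  rw [Sym2.eq_iff] at this
  rcases this with ⟨-, h2⟩ | ⟨h1, h2⟩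
  · exact h2
  · rw [h2, h1]

lemma IsPM.eq_of_subset {G G' : SimpleGraph W} {M M' : Set (Sym2 W)} (h : IsPM G M)
    (h' : IsPM G' M') (hss : M ⊆ M') : M' = M := by
  ext e
  refine ⟨fun he => ?_, fun he => hss he⟩
  induction e using Sym2.ind with
  | _ u w =>
    obtain ⟨x, hxM, -, -⟩ := h.exists_partner u
    have := h'.unique_at he (hss hxM) (Sym2.mem_mk_left u w) (Sym2.mem_mk_left u x)
    rw [this]; exact hxM

lemma IsPM.mono {G G' : SimpleGraph W} {M : Set (Sym2 W)} (hle : G ≤ G') (h : IsPM G M) :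
    IsPM G' M :=
  ⟨fun e he => edgeSet_mono hle (h.1 he), h.2⟩

lemma antiforcing_exists {G : SimpleGraph W} {M : Set (Sym2 W)} (h : IsPM G M) :
    ∃ S : Finset (Sym2 W), IsAntiForcingSet G M ↑S := by
  refine ⟨(G.edgeSet \ M).toFinite.toFinset, ?_⟩
  rw [Set.Finite.coe_toFinset]
  have hPM : IsPM (G.deleteEdges (G.edgeSet \ M)) M := by
    refine ⟨fun e he => ?_, h.2⟩
    rw [edgeSet_deleteEdges]
    exact ⟨h.1 he, fun hd => hd.2 he⟩
  refine ⟨le_refl _, hPM, fun M' hM' => ?_⟩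
  have hss : M' ⊆ M := by
    intro e he
    have := hM'.1 he
    rw [edgeSet_deleteEdges] at this
    by_contra hne
    exact this.2 ⟨this.1, hne⟩
  exact (hM'.eq_of_subset h hss).symm

lemma af_le {G : SimpleGraph W} {M : Set (Sym2 W)} (S : Finset (Sym2 W))
    (hS : IsAntiForcingSet G M ↑S) : af G M ≤ S.card :=
  Nat.sInf_le ⟨S, rfl, hS⟩

lemma af_exists {G : SimpleGraph W} {M : Set (Sym2 W)} (h : IsPM G M) :
    ∃ S : Finset (Sym2 W), S.card = af G M ∧ IsAntiForcingSet G M ↑S := by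
  obtain ⟨S, hS⟩ := antiforcing_exists h
  have h0 : {n | ∃ S : Finset (Sym2 W), S.card = n ∧ IsAntiForcingSet G M ↑S}.Nonempty :=
    ⟨S.card, S, rfl, hS⟩
  exact Nat.sInf_mem h0

lemma Af_bddAbove (G : SimpleGraph W) : BddAbove {n | ∃ M, IsPM G M ∧ af G M = n} := by
  refine ⟨Fintype.card (Sym2 W), fun n hn => ?_⟩
  obtain ⟨M, hM, rfl⟩ := hn
  obtain ⟨S, hcard, hS⟩ := af_exists hM
  rw [← hcard]
  exact le_trans (Finset.card_le_univ S) (le_of_eq (Finset.card_univ))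

lemma le_Af {G : SimpleGraph W} {M : Set (Sym2 W)} (h : IsPM G M) : af G M ≤ Af G :=
  le_csSup (Af_bddAbove G) ⟨M, h, rfl⟩

lemma Af_exists {G : SimpleGraph W} {M : Set (Sym2 W)} (h : IsPM G M) :
    ∃ M', IsPM G M' ∧ af G M' = Af G := by
  have h0 : {n | ∃ M, IsPM G M ∧ af G M = n}.Nonempty := ⟨af G M, M, h, rfl⟩
  exact Nat.sSup_mem h0 (Af_bddAbove G)

lemma Af_eq_zero_of_no_pm {G : SimpleGraph W} (h : ∀ M, ¬ IsPM G M) : Af G = 0 := by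
  have : {n | ∃ M, IsPM G M ∧ af G M = n} = ∅ := by
    ext n; simp only [Set.mem_setOf_eq, Set.mem_empty_iff_false, iff_false, not_exists]
    exact fun M hM => absurd hM.1 (by simpa using (h M))
  rw [Af, this, csSup_empty]
  rfl

lemma matching_isAcyclic {G : SimpleGraph W} {M : Set (Sym2 W)} (h : IsPM G M) :
    (SimpleGraph.fromEdgeSet M).IsAcyclic := by
  rw [isAcyclic_iff_forall_adj_isBridge]
  intro v w hvw
  rw [fromEdgeSet_adj] at hvw
  refine isBridge_iff.2 (fun (hr : (fromEdgeSet M \ fromEdgeSet {s(v,w)}).Reachable v w) => ?_)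
  obtain ⟨p⟩ := hr
  cases p with
  | nil => exact hvw.2 rfl
  | cons h' q =>
    rw [sdiff_adj] at h'
    obtain ⟨h1, h2⟩ := h'
    rw [fromEdgeSet_adj] at h1
    have h3 := h.unique_at h1.1 hvw.1 (Sym2.mem_mk_left _ _) (Sym2.mem_mk_left _ _)
    exact h2 ((fromEdgeSet_adj _).2 ⟨h3, h1.2⟩)

end Generic

section Forest

variable {W : Type*} [Fintype W] [DecidableEq W]

/-- An ascending walk along a sequence of pairwise adjacent vertices. -/
def ascWalk {H : SimpleGraph W} {f : ℕ → W} (hadj : ∀ n, H.Adj (f n) (f (n+1))) :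
    (k a : ℕ) → H.Walk (f a) (f (a + k))
  | 0, _ => SimpleGraph.Walk.nil
  | (k+1), a => (SimpleGraph.Walk.cons (hadj a) (ascWalk hadj k (a+1))).copy rfl
      (congrArg f (by omega))

lemma ascWalk_length {H : SimpleGraph W} {f : ℕ → W} (hadj : ∀ n, H.Adj (f n) (f (n+1)))
    (k a : ℕ) : (ascWalk hadj k a).length = k := by
  induction k generalizing a with
  | zero => rfl
  | succ k ih => simp [ascWalk, ih]

lemma ascWalk_support {H : SimpleGraph W} {f : ℕ → W} (hadj : ∀ n, H.Adj (f n) (f (n+1)))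
    (k a : ℕ) : (ascWalk hadj k a).support = (List.range (k+1)).map (fun i => f (a+i)) := by
  induction k generalizing a with
  | zero => simp [ascWalk, List.range_succ]
  | succ k ih =>
    have hfun : (fun i => f (a + 1 + i)) = (fun i => f (a + (i + 1))) := by
      funext i; congr 1; omega
    simp only [ascWalk, Walk.support_copy, Walk.support_cons, ih, List.range_succ_eq_map,
      List.map_cons, List.map_map, Function.comp_def, Nat.add_zero, hfun]

lemma forest_pm_subset_aux {H : SimpleGraph W} (hH : H.IsAcyclic) {M1 M2 : Set (Sym2 W)}
    (h1 : IsPM H M1) (h2 : IsPM H M2) {v0 w0 : W}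
    (he1 : s(v0, w0) ∈ M1) (he2 : s(v0, w0) ∉ M2) : False := by
  choose p1 hp1m hp1n hp1u using fun v => h1.exists_partner v
  choose p2 hp2m hp2n hp2u using fun v => h2.exists_partner v
  have hw0 : w0 = p1 v0 := hp1u v0 w0 he1
  set f : ℕ → W := fun n => Nat.rec v0 (fun n x => if Even n then p1 x else p2 x) n with hfdef
  have hf0 : f 0 = v0 := rfl
  have hfs : ∀ n, f (n+1) = if Even n then p1 (f n) else p2 (f n) := fun n => rfl
  have hinv : ∀ n, (Even n → s(f n, f (n+1)) ∈ M1 ∧ s(f n, f (n+1)) ∉ M2) ∧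
      (¬ Even n → s(f n, f (n+1)) ∈ M2 ∧ s(f n, f (n+1)) ∉ M1) := by
    intro n
    induction n with
    | zero =>
      refine ⟨fun _ => ?_, fun h => absurd Even.zero h⟩
      rw [hfs 0, if_pos Even.zero, hf0, ← hw0]
      exact ⟨he1, he2⟩
    | succ n ih =>
      by_cases hn : Even n
      · have hodd : ¬ Even (n+1) := by simp [Nat.even_add_one, hn]
        obtain ⟨hm1, hm2⟩ := ih.1 hn
        refine ⟨fun h => absurd h hodd, fun _ => ?_⟩
        rw [hfs (n+1), if_neg hodd]
        refine ⟨hp2m (f (n+1)), fun hginM1 => ?_⟩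
        have h4 := h1.unique_at hginM1 hm1 (Sym2.mem_mk_left _ _) (Sym2.mem_mk_right _ _)
        have := hp2m (f (n+1))
        rw [h4] at this
        exact hm2 this
      · have heven : Even (n+1) := Nat.even_add_one.2 hn
        obtain ⟨hm2, hm1⟩ := ih.2 hn
        refine ⟨fun _ => ?_, fun h => absurd heven h⟩
        rw [hfs (n+1), if_pos heven]
        refine ⟨hp1m (f (n+1)), fun hginM2 => ?_⟩
        have h4 := h2.unique_at hginM2 hm2 (Sym2.mem_mk_left _ _) (Sym2.mem_mk_right _ _)
        have := hp1m (f (n+1))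
        rw [h4] at this
        exact hm1 this
  have hadj : ∀ n, H.Adj (f n) (f (n+1)) := by
    intro n
    by_cases hn : Even n
    · exact (H.mem_edgeSet).1 (h1.1 ((hinv n).1 hn).1)
    · exact (H.mem_edgeSet).1 (h2.1 ((hinv n).2 hn).1)
  have hne2 : ∀ n, f (n+2) ≠ f n := by
    intro n heq
    by_cases hn : Even n
    · have hodd : ¬ Even (n+1) := by simp [Nat.even_add_one, hn]
      have h5 := ((hinv (n+1)).2 hodd).1
      have h6 := ((hinv n).1 hn).2
      rw [show (n+1)+1 = n+2 from rfl, heq, Sym2.eq_swap] at h5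
      exact h6 h5
    · have heven : Even (n+1) := Nat.even_add_one.2 hn
      have h5 := ((hinv (n+1)).1 heven).1
      have h6 := ((hinv n).2 hn).2
      rw [show (n+1)+1 = n+2 from rfl, heq, Sym2.eq_swap] at h5
      exact h6 h5
  have hP : ∃ j, ∃ i, i < j ∧ f i = f j := by
    obtain ⟨a, b, hab, hfab⟩ := Finite.exists_ne_map_eq_of_infinite f
    rcases lt_or_gt_of_ne hab with h | h
    · exact ⟨b, a, h, hfab⟩
    · exact ⟨a, b, h, hfab.symm⟩
  obtain ⟨i0, hij, hfij⟩ : ∃ i, i < Nat.find hP ∧ f i = f (Nat.find hP) := Nat.find_spec hP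
  set j0 := Nat.find hP with hj0def
  have hinj' : ∀ a b, a < b → b < j0 → f a ≠ f b := fun a b hab hb he =>
    Nat.find_min hP hb ⟨a, hab, he⟩
  have hgap : i0 + 3 ≤ j0 := by
    rcases Nat.lt_or_ge j0 (i0+3) with h | h
    · exfalso
      have : j0 = i0 + 1 ∨ j0 = i0 + 2 := by omega
      rcases this with hcase | hcase
      · rw [hcase] at hfij; exact (hadj i0).ne hfij
      · rw [hcase] at hfij; exact hne2 i0 hfij.symm
    · exact h
  set k := j0 - i0 - 1 with hkdef
  have hk2 : 2 ≤ k := by omega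
  have hj0k : i0+1+k = j0 := by omega
  let w3 : H.Walk (f (i0+1)) (f i0) :=
    (ascWalk hadj k (i0+1)).copy rfl (by rw [hj0k, ← hfij])
  have hp2len : w3.reverse.length = k := by
    simp [w3, Walk.length_reverse, Walk.length_copy, ascWalk_length]
  have hsupp : w3.support = (List.range (k+1)).map (fun i => f (i0+1+i)) := by
    simp [w3, Walk.support_copy, ascWalk_support]
  have key : ∀ x y, x < y → y < k+1 → f (i0+1+x) ≠ f (i0+1+y) := by
    intro x y hxy hy hfe
    rcases eq_or_lt_of_le (show i0+1+y ≤ j0 by omega) with heq | hlt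
    · rw [heq] at hfe
      exact hinj' i0 (i0+1+x) (by omega) (by omega) (hfij.trans hfe.symm)
    · exact hinj' (i0+1+x) (i0+1+y) (by omega) hlt hfe
  have hp2path : w3.reverse.IsPath := by
    rw [Walk.isPath_reverse_iff, Walk.isPath_def, hsupp]
    refine List.Nodup.map_on ?_ List.nodup_range
    intro x hx y hy hxy
    rw [List.mem_range] at hx hy
    by_contra hne
    rcases lt_or_gt_of_ne hne with h | h
    · exact key x y h hy hxy
    · exact key y x h hx hxy.symm
  have hp1path : (Walk.cons (hadj i0) Walk.nil).IsPath := by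
    simp [Walk.cons_isPath_iff, (hadj i0).ne]
  have heqp := hH.path_unique ⟨Walk.cons (hadj i0) Walk.nil, hp1path⟩ ⟨w3.reverse, hp2path⟩
  have hlen := congrArg (fun q : H.Path (f i0) (f (i0+1)) => q.1.length) heqp
  simp only [Walk.length_cons, Walk.length_nil, hp2len] at hlen
  omega

lemma forest_pm_unique {H : SimpleGraph W} (hH : H.IsAcyclic) {M1 M2 : Set (Sym2 W)}
    (h1 : IsPM H M1) (h2 : IsPM H M2) : M1 = M2 := by
  ext e
  induction e using Sym2.ind with
  | _ a b =>
    constructor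
    · intro h; by_contra h'; exact forest_pm_subset_aux hH h1 h2 h h'
    · intro h; by_contra h'; exact forest_pm_subset_aux hH h2 h1 h h'

end Forest

section SpanningTree

variable {W : Type*} [Fintype W] [DecidableEq W]

lemma reachable_deleteEdges_of {H : SimpleGraph W} {u v : W}
    (hr : (H \ SimpleGraph.fromEdgeSet {s(u,v)}).Reachable u v) {a b : W}
    (hab : H.Reachable a b) : (H.deleteEdges {s(u,v)}).Reachable a b := by
  have hdel : H.deleteEdges {s(u,v)} = H \ SimpleGraph.fromEdgeSet {s(u,v)} := rfl
  obtain ⟨p⟩ := hab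
  induction p with
  | nil => exact Reachable.refl _
  | @cons x y z h q ih =>
    by_cases he : s(x, y) = s(u, v)
    · have hxy : (H.deleteEdges {s(u,v)}).Reachable x y := by
        rw [hdel]
        rcases Sym2.eq_iff.1 he with ⟨rfl, rfl⟩ | ⟨rfl, rfl⟩
        · exact hr
        · exact hr.symm
      exact hxy.trans ih
    · refine (Reachable.trans ?_ ih)
      exact SimpleGraph.Adj.reachable
        (by rw [SimpleGraph.deleteEdges_adj]; exact ⟨h, by simp [he]⟩)

lemma exists_spanning_tree : ∀ (n : ℕ) (H A : SimpleGraph W), H.edgeSet.ncard = n →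
    H.Connected → A ≤ H → A.IsAcyclic → ∃ T : SimpleGraph W, A ≤ T ∧ T ≤ H ∧ T.IsTree := by
  intro n
  induction n using Nat.strong_induction_on with
  | _ n ih =>
    intro H A hn hconn hAH hA
    by_cases hac : H.IsAcyclic
    · exact ⟨H, hAH, le_refl _, ⟨hconn, hac⟩⟩
    · rw [SimpleGraph.IsAcyclic] at hac
      push_neg at hac
      obtain ⟨v, c, hc⟩ := hac
      have hedge : ∃ e ∈ c.edges, e ∉ A.edgeSet := by
        by_contra h'
        push_neg at h'
        exact hA (c.transfer A h') (hc.transfer h')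
      obtain ⟨e, hec, heA⟩ := hedge
      revert hec heA
      induction e using Sym2.ind with
      | _ x y =>
        intro hec heA
        have heH : s(x,y) ∈ H.edgeSet := c.edges_subset_edgeSet hec
        have hreach : (H \ SimpleGraph.fromEdgeSet {s(x,y)}).Reachable x y := by
          by_contra hre
          exact ((isBridge_iff_mem_and_forall_cycle_notMem heH).mp
            (SimpleGraph.isBridge_iff.2 hre)) c hc hec
        have hconn' : (H.deleteEdges {s(x,y)}).Connected := by
          rw [SimpleGraph.connected_iff]
          exact ⟨fun a b => reachable_deleteEdges_of hreach (hconn a b), hconn.nonempty⟩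
        have hlt : (H.deleteEdges {s(x,y)}).edgeSet.ncard < n := by
          rw [SimpleGraph.edgeSet_deleteEdges, ← hn]
          exact Set.ncard_lt_ncard (Set.sdiff_singleton_ssubset.2 heH) (Set.toFinite _)
        have hAle : A ≤ H.deleteEdges {s(x,y)} := by
          intro a b hab
          rw [SimpleGraph.deleteEdges_adj]
          refine ⟨hAH hab, fun hmem => ?_⟩
          rw [Set.mem_singleton_iff] at hmem
          apply heA
          rw [← hmem]
          exact hab
        obtain ⟨T, h1, h2, h3⟩ := ih _ hlt (H.deleteEdges {s(x,y)}) A rfl hconn' hAle hA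
        exact ⟨T, h1, le_trans h2 (SimpleGraph.deleteEdges_le _), h3⟩

lemma af_add_card_le {H : SimpleGraph W} (hconn : H.Connected) {N : Set (Sym2 W)}
    (hN : IsPM H N) : af H N + Fintype.card W ≤ H.edgeSet.ncard + 1 := by
  have hA_le : SimpleGraph.fromEdgeSet N ≤ H := by
    intro a b hab
    rw [SimpleGraph.fromEdgeSet_adj] at hab
    exact (H.mem_edgeSet).1 (hN.1 hab.1)
  obtain ⟨T, hAT, hTH, hT⟩ := exists_spanning_tree _ H (SimpleGraph.fromEdgeSet N) rfl hconn
    hA_le (matching_isAcyclic hN)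
  have hNT : N ⊆ T.edgeSet := by
    intro e
    induction e using Sym2.ind with
    | _ a b =>
      intro he
      exact (T.mem_edgeSet).2
        (hAT ((SimpleGraph.fromEdgeSet_adj _).2 ⟨he, ((H.mem_edgeSet).1 (hN.1 he)).ne⟩))
  have hdel : H.deleteEdges (H.edgeSet \ T.edgeSet) = T :=
    SimpleGraph.deleteEdges_sdiff_eq_of_le hTH
  have hanti : IsAntiForcingSet H N ↑((H.edgeSet \ T.edgeSet).toFinite.toFinset) := by
    rw [Set.Finite.coe_toFinset]
    refine ⟨fun e he => ⟨he.1, fun heN => he.2 (hNT heN)⟩, ?_, ?_⟩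
    · rw [hdel]; exact ⟨hNT, hN.2⟩
    · intro M' hM'
      rw [hdel] at hM'
      exact forest_pm_unique ((SimpleGraph.isTree_iff T).1 hT).2 hM' ⟨hNT, hN.2⟩
  have h1 : af H N ≤ ((H.edgeSet \ T.edgeSet).toFinite.toFinset).card := af_le _ hanti
  have hcardT : T.edgeFinset.card + 1 = Fintype.card W := hT.card_edgeFinset
  have hsub : T.edgeSet ⊆ H.edgeSet := SimpleGraph.edgeSet_mono hTH
  have hTE : T.edgeSet.ncard = T.edgeFinset.card := by
    rw [← SimpleGraph.coe_edgeFinset, Set.ncard_coe_finset]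
  have hSc : ((H.edgeSet \ T.edgeSet).toFinite.toFinset).card
      = H.edgeSet.ncard - T.edgeSet.ncard := by
    rw [← Set.ncard_eq_toFinset_card _ (H.edgeSet \ T.edgeSet).toFinite]
    exact Set.ncard_diff hsub (Set.toFinite _)
  have hle : T.edgeSet.ncard ≤ H.edgeSet.ncard := Set.ncard_le_ncard hsub (Set.toFinite _)
  omega

lemma Af_add_card_le {H : SimpleGraph W} (hconn : H.Connected) {N : Set (Sym2 W)}
    (hN : IsPM H N) : Af H + Fintype.card W ≤ H.edgeSet.ncard + 1 := by
  obtain ⟨M', hM', hEq⟩ := Af_exists hN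
  rw [← hEq]
  exact af_add_card_le hconn hM'

end SpanningTree

/-! ### Lemmas about `nonFixed` and normal components -/

section NFBasics

open SimpleGraph

lemma nonFixed_adj {G : SimpleGraph V} {a b : V} :
    (nonFixed G).Adj a b ↔ G.Adj a b ∧ ¬ IsFixedEdge G s(a,b) := by
  rw [nonFixed, SimpleGraph.fromEdgeSet_adj]
  constructor
  · rintro ⟨⟨h1, h2⟩, -⟩
    exact ⟨(G.mem_edgeSet).1 h1, h2⟩
  · rintro ⟨h1, h2⟩
    exact ⟨⟨(G.mem_edgeSet).2 h1, h2⟩, h1.ne⟩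

lemma nonFixed_le (G : SimpleGraph V) : nonFixed G ≤ G := by
  intro a b h
  exact (nonFixed_adj.1 h).1

lemma fixed_mem_all {G : SimpleGraph V} {e : Sym2 V} (hfix : IsFixedEdge G e)
    {M1 : Set (Sym2 V)} (h1 : IsPM G M1) (he : e ∈ M1) : ∀ M2, IsPM G M2 → e ∈ M2 := by
  rcases hfix.2 with hnone | hall
  · exact absurd he (hnone M1 h1)
  · exact hall

lemma matched_edge_not_fixed {G : SimpleGraph V} {M' : Set (Sym2 V)} (hM' : IsPM G M')
    {v u : V} (hvu : (nonFixed G).Adj v u) {e : Sym2 V} (he : e ∈ M') (hve : v ∈ e) :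
    ¬ IsFixedEdge G e := by
  intro hfix
  obtain ⟨hGadj, hnf⟩ := nonFixed_adj.1 hvu
  have hnf' := hnf
  rw [IsFixedEdge, not_and, not_or] at hnf'
  obtain ⟨hn1, -⟩ := hnf' ((G.mem_edgeSet).2 hGadj)
  push_neg at hn1
  obtain ⟨M1, hM1, hm1⟩ := hn1
  have heM1 : e ∈ M1 := fixed_mem_all hfix hM' he M1 hM1
  have heq : e = s(v,u) := hM1.unique_at heM1 hm1 hve (Sym2.mem_mk_left v u)
  rw [heq] at hfix
  exact hnf hfix

/-- A normal component is nontrivial if it contains an edge. -/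
def NontrivComp (G : SimpleGraph V) (K : (nonFixed G).ConnectedComponent) : Prop :=
  ∃ a b : V, (nonFixed G).Adj a b ∧ (nonFixed G).connectedComponentMk a = K

lemma nontriv_neighbor {G : SimpleGraph V} {K : (nonFixed G).ConnectedComponent}
    (hK : NontrivComp G K) {v : V} (hv : v ∈ K.supp) : ∃ u, (nonFixed G).Adj v u := by
  obtain ⟨a, b, hab, ha⟩ := hK
  have hcm : (nonFixed G).connectedComponentMk a = (nonFixed G).connectedComponentMk v :=
    ha.trans ((SimpleGraph.ConnectedComponent.mem_supp_iff K v).1 hv).symm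
  obtain ⟨p⟩ := (SimpleGraph.ConnectedComponent.eq.1 hcm).symm
  cases p with
  | nil => exact ⟨b, hab⟩
  | cons h q => exact ⟨_, h⟩

lemma induce_adj_iff {H : SimpleGraph V} {s : Set V} {a b : ↥s} :
    (SimpleGraph.induce s H).Adj a b ↔ H.Adj ↑a ↑b := Iff.rfl

lemma induce_edge_mem {H : SimpleGraph V} {s : Set V} {e : Sym2 ↥s} :
    e ∈ (SimpleGraph.induce s H).edgeSet ↔ Sym2.map Subtype.val e ∈ H.edgeSet := by
  induction e using Sym2.ind with
  | _ a b =>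
    rw [Sym2.map_pair_eq, SimpleGraph.mem_edgeSet, SimpleGraph.mem_edgeSet]
    exact induce_adj_iff

lemma mem_of_mem_smap {s : Set V} {e' : Sym2 ↥s} {u : V}
    (hu : u ∈ Sym2.map Subtype.val e') : u ∈ s := by
  obtain ⟨z, -, rfl⟩ := Sym2.mem_map.1 hu
  exact z.2

lemma smap_mem_iff {s : Set V} {e' : Sym2 ↥s} {x : ↥s} :
    x ∈ e' ↔ (↑x : V) ∈ Sym2.map Subtype.val e' := by
  constructor
  · exact fun h => Sym2.mem_map.2 ⟨x, h, rfl⟩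
  · intro h
    obtain ⟨z, hz, hzx⟩ := Sym2.mem_map.1 h
    have : z = x := Subtype.val_injective hzx
    exact this ▸ hz

lemma pm_induce {G : SimpleGraph V} {M' : Set (Sym2 V)} (hM' : IsPM G M')
    {K : (nonFixed G).ConnectedComponent} (hK : NontrivComp G K) :
    IsPM (SimpleGraph.induce K.supp (nonFixed G)) (Sym2.map Subtype.val ⁻¹' M') := by
  constructor
  · intro e'
    induction e' using Sym2.ind with
    | _ x y =>
      intro he'
      rw [Set.mem_preimage, Sym2.map_pair_eq] at he'
      obtain ⟨u, hu⟩ := nontriv_neighbor hK x.2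
      have hnf : ¬ IsFixedEdge G s((x:V), (y:V)) :=
        matched_edge_not_fixed hM' hu he' (Sym2.mem_mk_left _ _)
      have hGadj : G.Adj ↑x ↑y := (G.mem_edgeSet).1 (hM'.1 he')
      exact ((SimpleGraph.induce K.supp (nonFixed G)).mem_edgeSet).2
        (induce_adj_iff.2 (nonFixed_adj.2 ⟨hGadj, hnf⟩))
  · intro x
    obtain ⟨u, hu⟩ := nontriv_neighbor hK x.2
    obtain ⟨e, ⟨heM, hxe⟩, huniq⟩ := hM'.2 ↑x
    have hnf : ¬ IsFixedEdge G e := matched_edge_not_fixed hM' hu heM hxe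
    obtain ⟨w, rfl⟩ := Sym2.mem_iff_exists.1 hxe
    have hNFadj : (nonFixed G).Adj ↑x w :=
      nonFixed_adj.2 ⟨(G.mem_edgeSet).1 (hM'.1 heM), hnf⟩
    have hw : w ∈ K.supp := by
      rw [SimpleGraph.ConnectedComponent.mem_supp_iff,
        ← SimpleGraph.ConnectedComponent.connectedComponentMk_eq_of_adj hNFadj]
      exact (SimpleGraph.ConnectedComponent.mem_supp_iff K ↑x).1 x.2
    refine ⟨s(x, ⟨w, hw⟩), ⟨?_, Sym2.mem_mk_left _ _⟩, ?_⟩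
    · rw [Set.mem_preimage, Sym2.map_pair_eq]
      exact heM
    · rintro e' ⟨he'M, hxe'⟩
      apply Sym2.map.injective Subtype.val_injective
      rw [Sym2.map_pair_eq]
      exact huniq _ ⟨he'M, smap_mem_iff.1 hxe'⟩

lemma trivial_supp {G : SimpleGraph V} {K : (nonFixed G).ConnectedComponent}
    (hK : ¬ NontrivComp G K) : ∃ v, K.supp = {v} := by
  obtain ⟨v, hv⟩ := K.exists_rep
  refine ⟨v, Set.eq_singleton_iff_unique_mem.2
    ⟨(SimpleGraph.ConnectedComponent.mem_supp_iff K v).2 hv, ?_⟩⟩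
  intro w hw
  have hcm : (nonFixed G).connectedComponentMk w = (nonFixed G).connectedComponentMk v :=
    ((SimpleGraph.ConnectedComponent.mem_supp_iff K w).1 hw).trans hv.symm
  obtain ⟨p⟩ := SimpleGraph.ConnectedComponent.eq.1 hcm
  cases p with
  | nil => rfl
  | cons h q =>
    exact absurd ⟨w, _, h, (SimpleGraph.ConnectedComponent.mem_supp_iff K w).1 hw⟩ hK

lemma trivial_edgeSet {G : SimpleGraph V} {K : (nonFixed G).ConnectedComponent}
    (hK : ¬ NontrivComp G K) :
    (SimpleGraph.induce K.supp (nonFixed G)).edgeSet = ∅ := by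
  ext e'
  simp only [Set.mem_empty_iff_false, iff_false]
  induction e' using Sym2.ind with
  | _ x y =>
    intro he
    have hadj : (nonFixed G).Adj ↑x ↑y := induce_adj_iff.1 ((SimpleGraph.mem_edgeSet _).1 he)
    exact hK ⟨↑x, ↑y, hadj, (SimpleGraph.ConnectedComponent.mem_supp_iff K ↑x).1 x.2⟩

lemma trivial_no_pm {G : SimpleGraph V} {K : (nonFixed G).ConnectedComponent}
    (hK : ¬ NontrivComp G K) :
    ∀ N, ¬ IsPM (SimpleGraph.induce K.supp (nonFixed G)) N := by
  intro N hN
  obtain ⟨v, hv⟩ := K.exists_rep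
  obtain ⟨e, ⟨heN, -⟩, -⟩ := hN.2 ⟨v, (SimpleGraph.ConnectedComponent.mem_supp_iff K v).2 hv⟩
  have := hN.1 heN
  rw [trivial_edgeSet hK] at this
  exact this

lemma walk_in_supp_reach {H : SimpleGraph V} (K : H.ConnectedComponent) :
    ∀ {a b : V} (p : H.Walk a b) (ha : a ∈ K.supp) (hb : b ∈ K.supp),
      (SimpleGraph.induce K.supp H).Reachable ⟨a, ha⟩ ⟨b, hb⟩ := by
  intro a b p
  induction p with
  | nil => intro ha hb; exact Reachable.refl _
  | @cons a c b h q ih =>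
    intro ha hb
    have hc : c ∈ K.supp := by
      rw [SimpleGraph.ConnectedComponent.mem_supp_iff,
        ← SimpleGraph.ConnectedComponent.connectedComponentMk_eq_of_adj h]
      exact (SimpleGraph.ConnectedComponent.mem_supp_iff K a).1 ha
    exact Reachable.trans (SimpleGraph.Adj.reachable (induce_adj_iff.2 h)) (ih hc hb)

lemma induce_supp_connected' {H : SimpleGraph V} (K : H.ConnectedComponent) :
    (SimpleGraph.induce K.supp H).Connected := by
  rw [SimpleGraph.connected_iff]
  obtain ⟨v, hv⟩ := K.exists_rep
  refine ⟨fun x y => ?_, ⟨⟨v, (SimpleGraph.ConnectedComponent.mem_supp_iff K v).2 hv⟩⟩⟩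
  have hcm : H.connectedComponentMk ↑x = H.connectedComponentMk ↑y :=
    ((SimpleGraph.ConnectedComponent.mem_supp_iff K ↑x).1 x.2).trans
      ((SimpleGraph.ConnectedComponent.mem_supp_iff K ↑y).1 y.2).symm
  obtain ⟨p⟩ := SimpleGraph.ConnectedComponent.eq.1 hcm
  exact walk_in_supp_reach K p x.2 y.2

/-- The quotient graph on normal components: two components are adjacent
if some (necessarily fixed) edge of `G` joins them. -/
def quotGraph (G : SimpleGraph V) : SimpleGraph ((nonFixed G).ConnectedComponent) where
  Adj K L := K ≠ L ∧ ∃ u v : V, (nonFixed G).connectedComponentMk u = K ∧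
      (nonFixed G).connectedComponentMk v = L ∧ G.Adj u v
  symm := by
    constructor
    rintro K L ⟨hne, u, v, hu, hv, huv⟩
    exact ⟨hne.symm, v, u, hv, hu, huv.symm⟩
  loopless := ⟨fun K h => h.1 rfl⟩

lemma quot_walk {C : Type*} (cm : V → C) {G' : SimpleGraph V} {Q' : SimpleGraph C}
    (hedge : ∀ a b : V, G'.Adj a b → cm a ≠ cm b → Q'.Adj (cm a) (cm b)) :
    ∀ {a b : V}, G'.Walk a b → Q'.Reachable (cm a) (cm b) := by
  intro a b p
  induction p with
  | nil => exact Reachable.refl _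
  | @cons a c b h q ih =>
    by_cases hc : cm a = cm c
    · rw [hc]; exact ih
    · exact ((hedge _ _ h hc).reachable).trans ih

lemma quot_edge_fixed {G : SimpleGraph V} {u v : V} (huv : G.Adj u v)
    (hne : (nonFixed G).connectedComponentMk u ≠ (nonFixed G).connectedComponentMk v) :
    IsFixedEdge G s(u,v) := by
  by_contra h
  exact hne (SimpleGraph.ConnectedComponent.connectedComponentMk_eq_of_adj (nonFixed_adj.2 ⟨huv, h⟩))

end NFBasics

/-! ### Counting lemmas -/

section Counting

open SimpleGraph

/-- The set of fixed edges. -/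
def fixedEdges (G : SimpleGraph V) : Set (Sym2 V) := {e | IsFixedEdge G e}

lemma nonFixed_edgeSet (G : SimpleGraph V) :
    (nonFixed G).edgeSet = {e | e ∈ G.edgeSet ∧ ¬ IsFixedEdge G e} := by
  rw [nonFixed, SimpleGraph.edgeSet_fromEdgeSet]
  ext e
  constructor
  · rintro ⟨⟨h1, h2⟩, -⟩
    exact ⟨h1, h2⟩
  · rintro ⟨h1, h2⟩
    exact ⟨⟨h1, h2⟩, G.not_isDiag_of_mem_edgeSet h1⟩

lemma edge_count_split (G : SimpleGraph V) :
    G.edgeSet.ncard = (fixedEdges G).ncard + (nonFixed G).edgeSet.ncard := by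
  have hsplit : G.edgeSet = fixedEdges G ∪ (nonFixed G).edgeSet := by
    rw [nonFixed_edgeSet]
    ext e
    constructor
    · intro h
      by_cases hf : IsFixedEdge G e
      · exact Or.inl hf
      · exact Or.inr ⟨h, hf⟩
    · rintro (h | h)
      · exact h.1
      · exact h.1
  have hdisj : Disjoint (fixedEdges G) (nonFixed G).edgeSet := by
    rw [nonFixed_edgeSet]
    exact Set.disjoint_left.2 fun e h1 h2 => h2.2 h1
  rw [hsplit, Set.ncard_union_eq hdisj (Set.toFinite _) (Set.toFinite _)]

lemma vertex_count_split (G : SimpleGraph V) :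
    Fintype.card V = ∑ K : (nonFixed G).ConnectedComponent, Nat.card K.supp := by
  classical
  rw [← Finset.card_univ]
  rw [Finset.card_eq_sum_card_fiberwise
    (f := fun v => (nonFixed G).connectedComponentMk v) (t := Finset.univ)
    (fun v _ => Finset.mem_univ _)]
  refine Finset.sum_congr rfl fun K _ => ?_
  rw [Nat.card_coe_set_eq]
  have hs : K.supp
      = ↑(Finset.univ.filter fun v => (nonFixed G).connectedComponentMk v = K) := by
    ext v
    simp [SimpleGraph.ConnectedComponent.mem_supp_iff]
  rw [hs, Set.ncard_coe_finset]

lemma smap_image_edgeSet {H : SimpleGraph V} {s : Set V} :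
    (Sym2.map Subtype.val) '' (SimpleGraph.induce s H).edgeSet
      = {e ∈ H.edgeSet | ∀ v ∈ e, v ∈ s} := by
  ext e
  constructor
  · rintro ⟨e', he', rfl⟩
    exact ⟨induce_edge_mem.1 he', fun v hv => mem_of_mem_smap hv⟩
  · rintro ⟨he, hvs⟩
    revert he hvs
    induction e using Sym2.ind with
    | _ a b =>
      intro he hvs
      refine ⟨s(⟨a, hvs a (Sym2.mem_mk_left a b)⟩, ⟨b, hvs b (Sym2.mem_mk_right a b)⟩),
        ?_, ?_⟩
      · rw [induce_edge_mem, Sym2.map_pair_eq]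
        exact he
      · rw [Sym2.map_pair_eq]

lemma nf_filter_eq (G : SimpleGraph V) (K : (nonFixed G).ConnectedComponent) :
    {e ∈ (nonFixed G).edgeSet |
        Sym2.map ((nonFixed G).connectedComponentMk) e = s(K, K)}
      = {e ∈ (nonFixed G).edgeSet | ∀ v ∈ e, v ∈ K.supp} := by
  ext e
  induction e using Sym2.ind with
  | _ a b =>
    simp only [Set.mem_setOf_eq, Sym2.map_pair_eq]
    constructor
    · rintro ⟨he, hk⟩
      have hcab : (nonFixed G).connectedComponentMk a = K
          ∧ (nonFixed G).connectedComponentMk b = K := by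
        rcases Sym2.eq_iff.1 hk with ⟨h1, h2⟩ | ⟨h1, h2⟩ <;> exact ⟨h1, h2⟩
      refine ⟨he, fun v hv => ?_⟩
      rcases Sym2.mem_iff.1 hv with rfl | rfl
      · exact (SimpleGraph.ConnectedComponent.mem_supp_iff K v).2 hcab.1
      · exact (SimpleGraph.ConnectedComponent.mem_supp_iff K v).2 hcab.2
    · rintro ⟨he, hs⟩
      have ha : (nonFixed G).connectedComponentMk a = K :=
        (SimpleGraph.ConnectedComponent.mem_supp_iff K a).1 (hs a (Sym2.mem_mk_left a b))
      have hb : (nonFixed G).connectedComponentMk b = K :=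
        (SimpleGraph.ConnectedComponent.mem_supp_iff K b).1 (hs b (Sym2.mem_mk_right a b))
      exact ⟨he, by rw [ha, hb]⟩

lemma edge_count_comp (G : SimpleGraph V) :
    (nonFixed G).edgeSet.ncard = ∑ K : (nonFixed G).ConnectedComponent,
      (SimpleGraph.induce K.supp (nonFixed G)).edgeSet.ncard := by
  classical
  rw [Set.ncard_eq_toFinset_card _ (nonFixed G).edgeSet.toFinite]
  have hmem : ∀ e ∈ (nonFixed G).edgeSet.toFinite.toFinset,
      Sym2.map ((nonFixed G).connectedComponentMk) e
        ∈ (Finset.univ.image fun K : (nonFixed G).ConnectedComponent => s(K, K)) := by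
    intro e
    induction e using Sym2.ind with
    | _ a b =>
      intro he
      rw [Set.Finite.mem_toFinset] at he
      have hadj : (nonFixed G).Adj a b := ((nonFixed G).mem_edgeSet).1 he
      rw [Sym2.map_pair_eq,
        SimpleGraph.ConnectedComponent.connectedComponentMk_eq_of_adj hadj]
      exact Finset.mem_image_of_mem _ (Finset.mem_univ _)
  rw [Finset.card_eq_sum_card_fiberwise hmem]
  rw [Finset.sum_image
    (fun x _ y _ h => by rcases Sym2.eq_iff.1 h with ⟨h1, -⟩ | ⟨h1, -⟩ <;> exact h1)]
  refine Finset.sum_congr rfl fun K _ => ?_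
  have hset : ↑((nonFixed G).edgeSet.toFinite.toFinset.filter
        (fun x => Sym2.map ((nonFixed G).connectedComponentMk) x = s(K, K)))
      = (Sym2.map Subtype.val) '' (SimpleGraph.induce K.supp (nonFixed G)).edgeSet := by
    rw [Finset.coe_filter, smap_image_edgeSet, ← nf_filter_eq]
    ext e
    simp only [Set.mem_setOf_eq, Set.Finite.mem_toFinset, Finset.mem_coe]
  have hcc := congrArg Set.ncard hset
  rw [Set.ncard_coe_finset] at hcc
  rw [hcc, Set.ncard_image_of_injective _ (Sym2.map.injective Subtype.val_injective)]

lemma quot_edge_sub (G : SimpleGraph V) :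
    (quotGraph G).edgeSet
      ⊆ (Sym2.map ((nonFixed G).connectedComponentMk)) '' (fixedEdges G) := by
  intro e
  induction e using Sym2.ind with
  | _ K L =>
    intro he
    obtain ⟨hne, u, v, hu, hv, huv⟩ := ((quotGraph G).mem_edgeSet).1 he
    have hfix : IsFixedEdge G s(u, v) := quot_edge_fixed huv (by rw [hu, hv]; exact hne)
    exact ⟨s(u, v), hfix, by rw [Sym2.map_pair_eq, hu, hv]⟩

lemma quot_connected {G : SimpleGraph V} (hG : G.Connected) : (quotGraph G).Connected := by
  rw [SimpleGraph.connected_iff]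
  constructor
  · intro K L
    obtain ⟨u, hu⟩ := K.exists_rep
    obtain ⟨v, hv⟩ := L.exists_rep
    obtain ⟨p⟩ := hG.preconnected u v
    rw [← hu, ← hv]
    refine quot_walk ((nonFixed G).connectedComponentMk) ?_ p
    intro a b hab hne
    exact ⟨hne, a, b, rfl, rfl, hab⟩
  · obtain ⟨v⟩ := hG.nonempty
    exact ⟨(nonFixed G).connectedComponentMk v⟩

end Counting

/-- If `G` is a connected bipartite graph with a perfect matching
and `Af(G) = r(G)`, then every fixed edge of `G` is a cut-edge (bridge) and
every normal component `Gᵢ` satisfies `Af(Gᵢ) = r(Gᵢ)`. -/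
theorem statement11 (G : SimpleGraph V) (hG : G.Connected) (hbip : G.Colorable 2)
    (M : Set (Sym2 V)) (hM : IsPM G M)
    (hAf : (Af G : ℤ) = (G.edgeSet.ncard : ℤ) - Fintype.card V + 1) :
    (∀ e ∈ G.edgeSet, IsFixedEdge G e → G.IsBridge e) ∧
    ∀ K : (nonFixed G).ConnectedComponent,
      (Af (SimpleGraph.induce K.supp (nonFixed G)) : ℤ) =
        ((SimpleGraph.induce K.supp (nonFixed G)).edgeSet.ncard : ℤ) -
          Nat.card K.supp + 1 := by
  classical
  obtain ⟨Ms, hMs, hafMs⟩ := Af_exists hM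
  -- componentwise antiforcing sets for the optimal matching Ms
  have key : ∀ K : (nonFixed G).ConnectedComponent,
      ∃ SK : Finset (Sym2 ↥K.supp),
        SK.card ≤ Af (SimpleGraph.induce K.supp (nonFixed G)) ∧
        (NontrivComp G K →
          IsAntiForcingSet (SimpleGraph.induce K.supp (nonFixed G))
            (Sym2.map Subtype.val ⁻¹' Ms) ↑SK) := by
    intro K
    by_cases hK : NontrivComp G K
    · obtain ⟨S, hc, hS⟩ := af_exists (pm_induce hMs hK)
      exact ⟨S, hc ▸ le_Af (pm_induce hMs hK), fun _ => hS⟩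
    · exact ⟨∅, Nat.zero_le _, fun h => absurd h hK⟩
  choose SK hSKcard hSKanti using key
  set SS : Finset (Sym2 V) :=
    Finset.univ.biUnion (fun K => (SK K).image (Sym2.map Subtype.val)) with hSSdef
  have hSvert : ∀ (K : (nonFixed G).ConnectedComponent) (e : Sym2 V),
      e ∈ (SK K).image (Sym2.map Subtype.val) →
      (∀ v ∈ e, v ∈ K.supp) ∧ e ∈ G.edgeSet ∧ e ∉ Ms := by
    intro K e he
    rw [Finset.mem_image] at he
    obtain ⟨e', he', rfl⟩ := he
    by_cases hK : NontrivComp G K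
    · have hanti := hSKanti K hK
      have hsub := hanti.1 (Finset.mem_coe.2 he')
      refine ⟨fun v hv => mem_of_mem_smap hv, ?_, ?_⟩
      · have h2 : Sym2.map Subtype.val e' ∈ (nonFixed G).edgeSet :=
          induce_edge_mem.1 hsub.1
        rw [nonFixed_edgeSet] at h2
        exact h2.1
      · exact fun hmem => hsub.2 hmem
    · exfalso
      have h0 := hSKcard K
      rw [Af_eq_zero_of_no_pm (trivial_no_pm hK), Nat.le_zero, Finset.card_eq_zero] at h0
      rw [h0] at he'
      exact absurd he' (Finset.notMem_empty _)
  have hSS1 : ↑SS ⊆ G.edgeSet \ Ms := by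
    intro e he
    rw [Finset.mem_coe, hSSdef, Finset.mem_biUnion] at he
    obtain ⟨K, -, heK⟩ := he
    exact ⟨(hSvert K e heK).2.1, (hSvert K e heK).2.2⟩
  have hdisj : ∀ K ∈ Finset.univ, ∀ L ∈ Finset.univ, K ≠ L →
      Disjoint ((SK K).image (Sym2.map Subtype.val))
        ((SK L).image (Sym2.map Subtype.val)) := by
    intro K _ L _ hKL
    rw [Finset.disjoint_left]
    intro e heK heL
    rw [Finset.mem_image] at heK
    obtain ⟨e', -, rfl⟩ := heK
    revert heL
    induction e' using Sym2.ind with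
    | _ x y =>
      intro heL
      have hxL : (↑x : V) ∈ L.supp := (hSvert L _ heL).1 ↑x
        (by rw [Sym2.map_pair_eq]; exact Sym2.mem_mk_left _ _)
      exact hKL (((SimpleGraph.ConnectedComponent.mem_supp_iff K ↑x).1 x.2).symm.trans
        ((SimpleGraph.ConnectedComponent.mem_supp_iff L ↑x).1 hxL))
  have hcardSS : SS.card = ∑ K, (SK K).card := by
    rw [hSSdef, Finset.card_biUnion hdisj]
    exact Finset.sum_congr rfl fun K _ =>
      Finset.card_image_of_injective _ (Sym2.map.injective Subtype.val_injective)
  have hMsPM' : IsPM (G.deleteEdges ↑SS) Ms := by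
    refine ⟨fun e he => ?_, hMs.2⟩
    rw [SimpleGraph.edgeSet_deleteEdges]
    exact ⟨hMs.1 he, fun heSS => (hSS1 heSS).2 he⟩
  have hanti : IsAntiForcingSet G Ms ↑SS := by
    refine ⟨hSS1, hMsPM', fun M' hM' => ?_⟩
    have hM'G : IsPM G M' := hM'.mono (SimpleGraph.deleteEdges_le _)
    refine IsPM.eq_of_subset hMs hM'G ?_
    intro e heMs
    by_cases hfix : IsFixedEdge G e
    · exact fixed_mem_all hfix hMs heMs M' hM'G
    · revert heMs hfix
      induction e using Sym2.ind with
      | _ u v =>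
        intro heMs hfix
        have hGadj : G.Adj u v := (G.mem_edgeSet).1 (hMs.1 heMs)
        have hNFadj : (nonFixed G).Adj u v := nonFixed_adj.2 ⟨hGadj, hfix⟩
        have hK : NontrivComp G ((nonFixed G).connectedComponentMk u) := ⟨u, v, hNFadj, rfl⟩
        have hu : u ∈ ((nonFixed G).connectedComponentMk u).supp :=
          (SimpleGraph.ConnectedComponent.mem_supp_iff _ u).2 rfl
        have hv : v ∈ ((nonFixed G).connectedComponentMk u).supp :=
          (SimpleGraph.ConnectedComponent.mem_supp_iff _ v).2
            (SimpleGraph.ConnectedComponent.connectedComponentMk_eq_of_adj hNFadj).symm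
        have hantiK := hSKanti _ hK
        have hbase : IsPM (SimpleGraph.induce ((nonFixed G).connectedComponentMk u).supp
            (nonFixed G)) (Sym2.map Subtype.val ⁻¹' M') := pm_induce hM'G hK
        have hM'K : IsPM ((SimpleGraph.induce ((nonFixed G).connectedComponentMk u).supp
            (nonFixed G)).deleteEdges ↑(SK ((nonFixed G).connectedComponentMk u))) (Sym2.map Subtype.val ⁻¹' M') := by
          refine ⟨fun e' he' => ?_, hbase.2⟩
          rw [SimpleGraph.edgeSet_deleteEdges]
          refine ⟨hbase.1 he', fun hmem => ?_⟩
          have h1 : Sym2.map Subtype.val e' ∈ SS := by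
            rw [hSSdef]
            exact Finset.mem_biUnion.2 ⟨_, Finset.mem_univ _,
              Finset.mem_image_of_mem _ (Finset.mem_coe.1 hmem)⟩
          have h2 := hM'.1 he'
          rw [SimpleGraph.edgeSet_deleteEdges] at h2
          exact h2.2 h1
        have heqK := hantiK.2.2 _ hM'K
        have he' : s((⟨u, hu⟩ : ↥((nonFixed G).connectedComponentMk u).supp),
            (⟨v, hv⟩ : ↥((nonFixed G).connectedComponentMk u).supp))
            ∈ Sym2.map Subtype.val ⁻¹' Ms := by
          rw [Set.mem_preimage, Sym2.map_pair_eq]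
          exact heMs
        rw [← heqK, Set.mem_preimage, Sym2.map_pair_eq] at he'
        exact he'
  have hAfsum : Af G ≤ ∑ K : (nonFixed G).ConnectedComponent,
      Af (SimpleGraph.induce K.supp (nonFixed G)) := by
    calc Af G = af G Ms := hafMs.symm
    _ ≤ SS.card := af_le SS hanti
    _ = ∑ K, (SK K).card := hcardSS
    _ ≤ _ := Finset.sum_le_sum fun K _ => hSKcard K
  have hKle : ∀ K : (nonFixed G).ConnectedComponent,
      (Af (SimpleGraph.induce K.supp (nonFixed G)) : ℤ)
        ≤ ((SimpleGraph.induce K.supp (nonFixed G)).edgeSet.ncard : ℤ)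
          - (Nat.card K.supp : ℤ) + 1 := by
    intro K
    by_cases hK : NontrivComp G K
    · have hb := Af_add_card_le (induce_supp_connected' K) (pm_induce hM hK)
      have hcast : Nat.card K.supp = Fintype.card ↥K.supp := Nat.card_eq_fintype_card
      have h2 : ((Af (SimpleGraph.induce K.supp (nonFixed G)) : ℤ)
          + (Fintype.card ↥K.supp : ℤ))
          ≤ ((SimpleGraph.induce K.supp (nonFixed G)).edgeSet.ncard : ℤ) + 1 := by
        exact_mod_cast hb
      rw [hcast]
      linarith
    · obtain ⟨v, hsupp⟩ := trivial_supp hK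
      have h0 : Af (SimpleGraph.induce K.supp (nonFixed G)) = 0 :=
        Af_eq_zero_of_no_pm (trivial_no_pm hK)
      have h1 : (SimpleGraph.induce K.supp (nonFixed G)).edgeSet.ncard = 0 := by
        rw [trivial_edgeSet hK, Set.ncard_empty]
      have h2 : Nat.card K.supp = 1 := by
        rw [hsupp, Nat.card_coe_set_eq, Set.ncard_singleton]
      rw [h0, h1, h2]
      norm_num
  -- quotient graph: spanning tree and counting
  obtain ⟨T, -, hTQ, hT⟩ := exists_spanning_tree _ (quotGraph G) ⊥ rfl (quot_connected hG)
    bot_le isAcyclic_bot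
  have hTcard : T.edgeSet.ncard + 1 = Fintype.card ((nonFixed G).ConnectedComponent) := by
    rw [show T.edgeSet.ncard = T.edgeFinset.card by
      rw [← SimpleGraph.coe_edgeFinset, Set.ncard_coe_finset]]
    exact hT.card_edgeFinset
  have hchain1 : T.edgeSet.ncard ≤ (quotGraph G).edgeSet.ncard :=
    Set.ncard_le_ncard (SimpleGraph.edgeSet_mono hTQ) (Set.toFinite _)
  have hchain2 : (quotGraph G).edgeSet.ncard
      ≤ ((Sym2.map ((nonFixed G).connectedComponentMk)) '' (fixedEdges G)).ncard :=
    Set.ncard_le_ncard (quot_edge_sub G) (Set.toFinite _)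
  have hchain3 : ((Sym2.map ((nonFixed G).connectedComponentMk)) '' (fixedEdges G)).ncard
      ≤ (fixedEdges G).ncard := Set.ncard_image_le (Set.toFinite _)
  have hFFgeN : Fintype.card ((nonFixed G).ConnectedComponent) ≤ (fixedEdges G).ncard + 1 := by
    omega
  -- sums in ℤ
  have hsumr : (∑ K : (nonFixed G).ConnectedComponent,
        (((SimpleGraph.induce K.supp (nonFixed G)).edgeSet.ncard : ℤ)
          - (Nat.card K.supp : ℤ) + 1))
      = ((nonFixed G).edgeSet.ncard : ℤ) - (Fintype.card V : ℤ)
          + (Fintype.card ((nonFixed G).ConnectedComponent) : ℤ) := by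
    rw [Finset.sum_add_distrib, Finset.sum_sub_distrib, ← Nat.cast_sum, ← Nat.cast_sum,
      ← edge_count_comp G, ← vertex_count_split G, Finset.sum_const, Finset.card_univ,
      nsmul_eq_mul, mul_one]
  have hC2 : (G.edgeSet.ncard : ℤ) = ((fixedEdges G).ncard : ℤ)
      + ((nonFixed G).edgeSet.ncard : ℤ) := by
    exact_mod_cast edge_count_split G
  have hAfsumZ : (Af G : ℤ)
      ≤ ∑ K : (nonFixed G).ConnectedComponent,
          (Af (SimpleGraph.induce K.supp (nonFixed G)) : ℤ) := by
    exact_mod_cast hAfsum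
  have hsumle : (∑ K : (nonFixed G).ConnectedComponent,
        (Af (SimpleGraph.induce K.supp (nonFixed G)) : ℤ))
      ≤ ∑ K : (nonFixed G).ConnectedComponent,
          (((SimpleGraph.induce K.supp (nonFixed G)).edgeSet.ncard : ℤ)
            - (Nat.card K.supp : ℤ) + 1) :=
    Finset.sum_le_sum fun K _ => hKle K
  have hFFgeZ : (Fintype.card ((nonFixed G).ConnectedComponent) : ℤ)
      ≤ ((fixedEdges G).ncard : ℤ) + 1 := by exact_mod_cast hFFgeN
  have hEQ1 : (∑ K : (nonFixed G).ConnectedComponent,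
        (Af (SimpleGraph.induce K.supp (nonFixed G)) : ℤ))
      = ∑ K : (nonFixed G).ConnectedComponent,
          (((SimpleGraph.induce K.supp (nonFixed G)).edgeSet.ncard : ℤ)
            - (Nat.card K.supp : ℤ) + 1) := by
    linarith
  have hEQ2 : ((fixedEdges G).ncard : ℤ)
      = (Fintype.card ((nonFixed G).ConnectedComponent) : ℤ) - 1 := by
    linarith
  have hpoint := (Finset.sum_eq_sum_iff_of_le fun K _ => hKle K).1 hEQ1
  -- bridge part
  have hFFcardN : (fixedEdges G).ncard + 1 = Fintype.card ((nonFixed G).ConnectedComponent) := by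
    exact_mod_cast (by linarith :
      ((fixedEdges G).ncard : ℤ) + 1 = (Fintype.card ((nonFixed G).ConnectedComponent) : ℤ))
  have hQcard : (quotGraph G).edgeSet.ncard = (fixedEdges G).ncard := by omega
  have hTQcard : T.edgeSet.ncard = (quotGraph G).edgeSet.ncard := by omega
  have hTQeq : T = quotGraph G :=
    SimpleGraph.edgeSet_inj.1 (Set.eq_of_subset_of_ncard_le
      (SimpleGraph.edgeSet_mono hTQ) (le_of_eq hTQcard.symm) (Set.toFinite _))
  have hQtree : (quotGraph G).IsTree := hTQeq ▸ hT
  have himgQ : (quotGraph G).edgeSet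
      = (Sym2.map ((nonFixed G).connectedComponentMk)) '' (fixedEdges G) := by
    refine Set.eq_of_subset_of_ncard_le (quot_edge_sub G) ?_ (Set.toFinite _)
    rw [hQcard]
    exact hchain3
  have hinj : Set.InjOn (Sym2.map ((nonFixed G).connectedComponentMk)) (fixedEdges G) := by
    have himcard : ((Sym2.map ((nonFixed G).connectedComponentMk)) '' (fixedEdges G)).ncard
        = (fixedEdges G).ncard := by rw [← himgQ, hQcard]
    have h1 : ((fixedEdges G).toFinite.toFinset.image
          (Sym2.map ((nonFixed G).connectedComponentMk))).card
        = ((Sym2.map ((nonFixed G).connectedComponentMk)) '' (fixedEdges G)).ncard := by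
      rw [← Set.ncard_coe_finset, Finset.coe_image, Set.Finite.coe_toFinset]
    have h2 : (fixedEdges G).toFinite.toFinset.card = (fixedEdges G).ncard := by
      rw [← Set.ncard_coe_finset, Set.Finite.coe_toFinset]
    have h3 := Finset.injOn_of_card_image_eq (by rw [h1, h2, himcard])
    rwa [Set.Finite.coe_toFinset] at h3
  refine ⟨?_, fun K => hpoint K (Finset.mem_univ K)⟩
  intro e
  induction e using Sym2.ind with
  | _ u v =>
    intro heG hfix
    have hQedge : s((nonFixed G).connectedComponentMk u, (nonFixed G).connectedComponentMk v)
        ∈ (quotGraph G).edgeSet := by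
      rw [himgQ]
      exact ⟨s(u,v), hfix, by rw [Sym2.map_pair_eq]⟩
    have hQbridge := (isAcyclic_iff_forall_edge_isBridge.1
      ((SimpleGraph.isTree_iff (quotGraph G)).1 hQtree).2) hQedge
    rw [SimpleGraph.isBridge_iff]
    refine fun (hre : (G \ SimpleGraph.fromEdgeSet {s(u,v)}).Reachable u v) => ?_
    obtain ⟨p⟩ := hre
    have hmap := quot_walk ((nonFixed G).connectedComponentMk)
      (Q' := (quotGraph G) \ SimpleGraph.fromEdgeSet
        {s((nonFixed G).connectedComponentMk u, (nonFixed G).connectedComponentMk v)})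
      ?_ p
    · exact ((SimpleGraph.isBridge_iff).1 hQbridge) hmap
    · intro a b hab hne
      rw [SimpleGraph.sdiff_adj] at hab
      obtain ⟨hGab, hnotdel⟩ := hab
      have habne : s(a,b) ≠ s(u,v) := by
        intro hcon
        exact hnotdel ((SimpleGraph.fromEdgeSet_adj _).2
          ⟨Set.mem_singleton_iff.2 hcon, hGab.ne⟩)
      have hfab : IsFixedEdge G s(a,b) := quot_edge_fixed hGab hne
      rw [SimpleGraph.sdiff_adj]
      refine ⟨⟨hne, a, b, rfl, rfl, hGab⟩, fun hdel => ?_⟩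
      rw [SimpleGraph.fromEdgeSet_adj] at hdel
      have hmapped : Sym2.map ((nonFixed G).connectedComponentMk) s(a,b)
          = Sym2.map ((nonFixed G).connectedComponentMk) s(u,v) := by
        rw [Sym2.map_pair_eq, Sym2.map_pair_eq]
        exact Set.mem_singleton_iff.1 hdel.1
      exact habne (hinj hfab hfix hmapped)
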